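/- Let a > 0, ξ ∈ ℝ³ with ξ ≠ 0, and let λ₁, λ₂, λ₃ ∈ ℂ be pairwise distinct roots of z³ + a|ξ|²z² + (|ξ|²+1)z + a|ξ|⁴ = 0 with each λⱼ ≠ 0 and λᵢ + λⱼ ≠ 0 for i ≠ j. Let M₁⁰, M₂⁰, M₃⁰ ∈ ℂ³ satisfy ξ·Mⱼ⁰ = 0 for j = 1,2,3, set D = (λ₁−λ₂)(λ₂−λ₃)(λ₃−λ₁), and define C₁ = [−λ₁(λ₂−λ₃)M₁⁰ + λ₁(λ₂²−λ₃²)M₂⁰ + (λ₂²−λ₃²)·iξ×M₃⁰]/D, C₂ = [−λ₂(λ₃−λ₁)M₁⁰ + λ₂(λ₃²−λ₁²)M₂⁰ + (λ₃²−λ₁²)·iξ×M₃⁰]/D, C₃ = [−λ₃(λ₁−λ₂)M₁⁰ + λ₃(λ₁²−λ₂²)M₂⁰ + (λ₁²−λ₂²)·iξ×M₃⁰]/D. Then the two identities hold: M₃⁰ + iξ×(C₁/λ₁ + C₂/λ₂ + C₃/λ₃) = 0 and M₁⁰ + C₁/(λ₁ + a|ξ|²) + C₂/(λ₂ + a|ξ|²)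 + C₃/(λ₃ + a|ξ|²) = 0. -/
import Mathlib


noncomputable section

/-- Complex cross product of two vectors in `ℂ³`. -/
def crossC (a b : Fin 3 → ℂ) : Fin 3 → ℂ :=
  ![a 1 * b 2 - a 2 * b 1, a 2 * b 0 - a 0 * b 2, a 0 * b 1 - a 1 * b 0]

/-- The complexification of a real vector `ξ ∈ ℝ³`. -/
def vecC (ξ : EuclideanSpace ℝ (Fin 3)) : Fin 3 → ℂ := fun i => ((ξ i : ℝ) : ℂ)

lemma crossC_apply0 (a b : Fin 3 → ℂ) : crossC a b 0 = a 1 * b 2 - a 2 * b 1 := rfl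
lemma crossC_apply1 (a b : Fin 3 → ℂ) : crossC a b 1 = a 2 * b 0 - a 0 * b 2 := rfl
lemma crossC_apply2 (a b : Fin 3 → ℂ) : crossC a b 2 = a 0 * b 1 - a 1 * b 0 := rfl

/-- the two identities
`M₃⁰ + iξ×(C₁/l₁ + C₂/l₂ + C₃/l₃) = 0` and
`M₁⁰ + C₁/(l₁+a|ξ|²) + C₂/(l₂+a|ξ|²) + C₃/(l₃+a|ξ|²) = 0`
for the coefficients `Cⱼ` built from the pairwise-distinct roots
`l₁, l₂, l₃` of `z³ + a|ξ|²z² + (|ξ|²+1)z + a|ξ|⁴ = 0` and data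
`M₁⁰, M₂⁰, M₃⁰ ⊥ ξ`. -/
theorem stmt8 (a : ℝ) (ha : 0 < a) (ξ : EuclideanSpace ℝ (Fin 3)) (hξ : ξ ≠ 0)
    (l₁ l₂ l₃ : ℂ)
    (hr1 : l₁^3 + ((a*‖ξ‖^2 : ℝ):ℂ)*l₁^2 + ((‖ξ‖^2+1 : ℝ):ℂ)*l₁ + ((a*‖ξ‖^4 : ℝ):ℂ) = 0)
    (hr2 : l₂^3 + ((a*‖ξ‖^2 : ℝ):ℂ)*l₂^2 + ((‖ξ‖^2+1 : ℝ):ℂ)*l₂ + ((a*‖ξ‖^4 : ℝ):ℂ) = 0)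
    (hr3 : l₃^3 + ((a*‖ξ‖^2 : ℝ):ℂ)*l₃^2 + ((‖ξ‖^2+1 : ℝ):ℂ)*l₃ + ((a*‖ξ‖^4 : ℝ):ℂ) = 0)
    (h12 : l₁ ≠ l₂) (h23 : l₂ ≠ l₃) (h31 : l₃ ≠ l₁)
    (hz1 : l₁ ≠ 0) (hz2 : l₂ ≠ 0) (hz3 : l₃ ≠ 0)
    (hs12 : l₁ + l₂ ≠ 0) (hs23 : l₂ + l₃ ≠ 0) (hs31 : l₃ + l₁ ≠ 0)
    (M₁ M₂ M₃ : Fin 3 → ℂ)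
    (hM1 : (∑ i, ((ξ i : ℝ):ℂ) * M₁ i) = 0)
    (hM2 : (∑ i, ((ξ i : ℝ):ℂ) * M₂ i) = 0)
    (hM3 : (∑ i, ((ξ i : ℝ):ℂ) * M₃ i) = 0)
    (C₁ C₂ C₃ : Fin 3 → ℂ)
    (hC1 : ∀ i, C₁ i = (-(l₁)*(l₂-l₃)*M₁ i + l₁*(l₂^2-l₃^2)*M₂ i
      + (l₂^2-l₃^2)*(Complex.I * crossC (vecC ξ) M₃ i))
        / ((l₁-l₂)*(l₂-l₃)*(l₃-l₁)))
    (hC2 : ∀ i, C₂ i = (-(l₂)*(l₃-l₁)*M₁ i + l₂*(l₃^2-l₁^2)*M₂ i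
      + (l₃^2-l₁^2)*(Complex.I * crossC (vecC ξ) M₃ i))
        / ((l₁-l₂)*(l₂-l₃)*(l₃-l₁)))
    (hC3 : ∀ i, C₃ i = (-(l₃)*(l₁-l₂)*M₁ i + l₃*(l₁^2-l₂^2)*M₂ i
      + (l₁^2-l₂^2)*(Complex.I * crossC (vecC ξ) M₃ i))
        / ((l₁-l₂)*(l₂-l₃)*(l₃-l₁))) :
    (∀ i, M₃ i + Complex.I
        * crossC (vecC ξ) (fun j => C₁ j / l₁ + C₂ j / l₂ + C₃ j / l₃) i = 0) ∧
    (∀ i, M₁ i + C₁ i / (l₁ + ((a*‖ξ‖^2 : ℝ):ℂ))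
        + C₂ i / (l₂ + ((a*‖ξ‖^2 : ℝ):ℂ))
        + C₃ i / (l₃ + ((a*‖ξ‖^2 : ℝ):ℂ)) = 0) := by

  -- notation
  have hnx : ‖ξ‖ ≠ 0 := norm_ne_zero_iff.mpr hξ
  have hsC : ((a*‖ξ‖^2 : ℝ):ℂ) ≠ 0 := by
    rw [Complex.ofReal_ne_zero]; positivity
  have hrC : ((‖ξ‖^2 : ℝ):ℂ) ≠ 0 := by
    rw [Complex.ofReal_ne_zero]; positivity
  have hd12 : l₁ - l₂ ≠ 0 := sub_ne_zero.mpr h12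
  have hd23 : l₂ - l₃ ≠ 0 := sub_ne_zero.mpr h23
  have hd31 : l₃ - l₁ ≠ 0 := sub_ne_zero.mpr h31
  -- Vieta
  have hA : l₁^2 + l₁*l₂ + l₂^2 + ((a*‖ξ‖^2 : ℝ):ℂ)*(l₁+l₂) + ((‖ξ‖^2+1 : ℝ):ℂ) = 0 := by
    have h : (l₁-l₂) * (l₁^2 + l₁*l₂ + l₂^2 + ((a*‖ξ‖^2 : ℝ):ℂ)*(l₁+l₂) + ((‖ξ‖^2+1 : ℝ):ℂ)) = 0 := by
      linear_combination hr1 - hr2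
    exact (mul_eq_zero.mp h).resolve_left hd12
  have hB : l₂^2 + l₂*l₃ + l₃^2 + ((a*‖ξ‖^2 : ℝ):ℂ)*(l₂+l₃) + ((‖ξ‖^2+1 : ℝ):ℂ) = 0 := by
    have h : (l₂-l₃) * (l₂^2 + l₂*l₃ + l₃^2 + ((a*‖ξ‖^2 : ℝ):ℂ)*(l₂+l₃) + ((‖ξ‖^2+1 : ℝ):ℂ)) = 0 := by
      linear_combination hr2 - hr3
    exact (mul_eq_zero.mp h).resolve_left hd23
  have hsum : l₁ + l₂ + l₃ = -((a*‖ξ‖^2 : ℝ):ℂ) := by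
    have h : (l₃-l₁) * (l₁ + l₂ + l₃ + ((a*‖ξ‖^2 : ℝ):ℂ)) = 0 := by
      linear_combination hB - hA
    have := (mul_eq_zero.mp h).resolve_left hd31
    linear_combination this
  have hp : l₁*l₂ + l₂*l₃ + l₃*l₁ = ((‖ξ‖^2+1 : ℝ):ℂ) := by
    linear_combination (l₁+l₂)*hsum - hA
  have hq : l₁*l₂*l₃ = -((a*‖ξ‖^4 : ℝ):ℂ) := by
    linear_combination hr1 - l₁^2*hsum + l₁*hp
  have hpq : ((a*‖ξ‖^4 : ℝ):ℂ) = ((a*‖ξ‖^2 : ℝ):ℂ) * ((‖ξ‖^2 : ℝ):ℂ) := by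
    push_cast; ring
  have hrc : l₁*l₂*l₃ = (l₁+l₂+l₃) * ((‖ξ‖^2 : ℝ):ℂ) := by
    linear_combination hq - hpq - ((‖ξ‖^2 : ℝ):ℂ)*hsum
  have hcast : ((a*‖ξ‖^2 : ℝ):ℂ)*((‖ξ‖^2+1 : ℝ):ℂ) = ((a*‖ξ‖^2 : ℝ):ℂ) + ((a*‖ξ‖^4 : ℝ):ℂ) := by
    push_cast; ring
  have hcon : (l₁+l₂+l₃)*(l₁*l₂+l₂*l₃+l₃*l₁) = (l₁+l₂+l₃) + l₁*l₂*l₃ := by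
    linear_combination (l₁*l₂+l₂*l₃+l₃*l₁)*hsum - ((a*‖ξ‖^2 : ℝ):ℂ)*hp - hsum - hq - hcast
  have he1 : l₁ + l₂ + l₃ ≠ 0 := by
    rw [hsum]; exact neg_ne_zero.mpr hsC
  have he3 : l₁*l₂*l₃ ≠ 0 := mul_ne_zero (mul_ne_zero hz1 hz2) hz3
  -- norm squared expansion
  have hnormsq : ((‖ξ‖^2 : ℝ):ℂ) = vecC ξ 0^2 + vecC ξ 1^2 + vecC ξ 2^2 := by
    have h1 : ‖ξ‖^2 = ξ 0^2 + ξ 1^2 + ξ 2^2 := by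
      rw [EuclideanSpace.norm_eq, Real.sq_sqrt (by positivity)]
      simp [Fin.sum_univ_three, sq_abs]
    simp only [vecC]
    rw [h1]; push_cast; ring
  have hM3' : vecC ξ 0 * M₃ 0 + vecC ξ 1 * M₃ 1 + vecC ξ 2 * M₃ 2 = 0 := by
    simpa [Fin.sum_univ_three, vecC] using hM3
  have hcross2 : ∀ i, crossC (vecC ξ) (crossC (vecC ξ) M₃) i = -((‖ξ‖^2 : ℝ):ℂ) * M₃ i := by
    intro i
    match i with
    | 0 =>
      rw [crossC_apply0, crossC_apply1, crossC_apply2]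
      linear_combination vecC ξ 0 * hM3' + M₃ 0 * hnormsq
    | 1 =>
      rw [crossC_apply1, crossC_apply0, crossC_apply2]
      linear_combination vecC ξ 1 * hM3' + M₃ 1 * hnormsq
    | 2 =>
      rw [crossC_apply2, crossC_apply0, crossC_apply1]
      linear_combination vecC ξ 2 * hM3' + M₃ 2 * hnormsq
  have hD : (l₁-l₂)*(l₂-l₃)*(l₃-l₁) ≠ 0 := mul_ne_zero (mul_ne_zero hd12 hd23) hd31
  have hV : ∀ j, C₁ j / l₁ + C₂ j / l₂ + C₃ j / l₃
      = (-(l₁+l₂+l₃) * (Complex.I * crossC (vecC ξ) M₃ j)) / (l₁*l₂*l₃) := by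
    intro j
    rw [hC1 j, hC2 j, hC3 j, div_div, div_div, div_div,
      div_add_div _ _ (mul_ne_zero hD hz1) (mul_ne_zero hD hz2),
      div_add_div _ _ (mul_ne_zero (mul_ne_zero hD hz1) (mul_ne_zero hD hz2))
        (mul_ne_zero hD hz3),
      div_eq_div_iff (mul_ne_zero (mul_ne_zero (mul_ne_zero hD hz1) (mul_ne_zero hD hz2))
        (mul_ne_zero hD hz3)) he3]
    ring
  constructor
  · intro i
    have hfun : (fun j => C₁ j / l₁ + C₂ j / l₂ + C₃ j / l₃)
        = (fun j => (-(l₁+l₂+l₃) * (Complex.I * crossC (vecC ξ) M₃ j)) / (l₁*l₂*l₃)) :=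
      funext hV
    rw [hfun]
    have hlin : ∀ i, crossC (vecC ξ)
        (fun j => (-(l₁+l₂+l₃) * (Complex.I * crossC (vecC ξ) M₃ j)) / (l₁*l₂*l₃)) i
        = (-(l₁+l₂+l₃)/(l₁*l₂*l₃)) * Complex.I * crossC (vecC ξ) (crossC (vecC ξ) M₃) i := by
      intro i
      match i with
      | 0 => rw [crossC_apply0, crossC_apply0, crossC_apply1, crossC_apply2]; ring
      | 1 => rw [crossC_apply1, crossC_apply1, crossC_apply0, crossC_apply2]; ring
      | 2 => rw [crossC_apply2, crossC_apply2, crossC_apply0, crossC_apply1]; ring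
    rw [hlin i, hcross2 i]
    have h9 : (l₁*l₂*l₃)⁻¹ * (l₁*l₂*l₃) = 1 := inv_mul_cancel₀ he3
    linear_combination ((l₁+l₂+l₃)*(l₁*l₂*l₃)⁻¹*((‖ξ‖^2 : ℝ):ℂ)*(M₃ i)) * Complex.I_mul_I
      + ((l₁*l₂*l₃)⁻¹*(M₃ i)) * hrc + (-(M₃ i)) * h9
  · intro i
    have d₁ : l₁ + ((a*‖ξ‖^2 : ℝ):ℂ) = -(l₂+l₃) := by linear_combination hsum
    have d₂ : l₂ + ((a*‖ξ‖^2 : ℝ):ℂ) = -(l₃+l₁) := by linear_combination hsum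
    have d₃ : l₃ + ((a*‖ξ‖^2 : ℝ):ℂ) = -(l₁+l₂) := by linear_combination hsum
    have key : (-(l₁)*(l₂-l₃)*M₁ i + l₁*(l₂^2-l₃^2)*M₂ i
          + (l₂^2-l₃^2)*(Complex.I * crossC (vecC ξ) M₃ i))
            / ((l₁-l₂)*(l₂-l₃)*(l₃-l₁) * (l₂+l₃))
        + (-(l₂)*(l₃-l₁)*M₁ i + l₂*(l₃^2-l₁^2)*M₂ i
          + (l₃^2-l₁^2)*(Complex.I * crossC (vecC ξ) M₃ i))
            / ((l₁-l₂)*(l₂-l₃)*(l₃-l₁) * (l₃+l₁))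
        + (-(l₃)*(l₁-l₂)*M₁ i + l₃*(l₁^2-l₂^2)*M₂ i
          + (l₁^2-l₂^2)*(Complex.I * crossC (vecC ξ) M₃ i))
            / ((l₁-l₂)*(l₂-l₃)*(l₃-l₁) * (l₁+l₂)) = M₁ i := by
      rw [div_add_div _ _ (mul_ne_zero hD hs23) (mul_ne_zero hD hs31),
        div_add_div _ _ (mul_ne_zero (mul_ne_zero hD hs23) (mul_ne_zero hD hs31))
          (mul_ne_zero hD hs12),
        div_eq_iff (mul_ne_zero (mul_ne_zero (mul_ne_zero hD hs23) (mul_ne_zero hD hs31))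
          (mul_ne_zero hD hs12))]
      linear_combination (-(M₁ i)) * ((l₁-l₂)*(l₂-l₃)*(l₃-l₁))^3 * hcon
    rw [hC1 i, hC2 i, hC3 i, d₁, d₂, d₃, div_neg, div_neg, div_neg,
      div_div, div_div, div_div]
    linear_combination -key

end
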